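/- Let λ > 0 and let p be the exponential density p(x) = λ e^{−λx} for x ≥ 0 and p(x) = 0 for x < 0. Let α ∈ (0,1). Then: (1) the interval [0, −log(1−α)/λ] satisfies ∫ over it of p equal to exactly α and has Lebesgue measure −log(1−α)/λ; and (2) every Lebesgue-measurable set X ⊆ ℝ with ∫_X p ≥ α has Lebesgue measure at least −log(1−α)/λ. Hence [0, −log(1−α)/λ] is a minimum volume set for the Exponential(λ) distribution with area α. -/

import Mathlib

open MeasureTheory

private lemma exp_interval_integral (l : ℝ) (a b : ℝ) :
    ∫ x in a..b, l * Real.exp (-l * x) = Real.exp (-l * a) - Real.exp (-l * b) := by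
  have h : ∀ x : ℝ, HasDerivAt (fun y => -Real.exp (-l * y)) (l * Real.exp (-l * x)) x := by
    intro x
    have h1 : HasDerivAt (fun y : ℝ => -l * y) (-l) x := by
      simpa using (hasDerivAt_id x).const_mul (-l)
    have h2 := (h1.exp).neg
    refine h2.congr_deriv ?_
    ring
  have := intervalIntegral.integral_eq_sub_of_hasDerivAt (a := a) (b := b)
    (f := fun y => -Real.exp (-l * y))
    (f' := fun x => l * Real.exp (-l * x)) (fun x _ => h x) ?_
  · rw [this]; ring
  · apply Continuous.intervalIntegrable
    continuity

private lemma p_integrable (l : ℝ) (hl : 0 < l) (p : ℝ → ℝ)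
    (hp : ∀ x, p x = if 0 ≤ x then l * Real.exp (-l * x) else 0) :
    Integrable p := by
  have heq : p = Set.indicator (Set.Ici (0:ℝ)) (fun x => l * Real.exp (-l * x)) := by
    funext x
    rw [hp x, Set.indicator]
    simp [Set.mem_Ici]
  rw [heq, integrable_indicator_iff measurableSet_Ici]
  have h1 : IntegrableOn (fun x => Real.exp (-l * x)) (Set.Ioi (-1:ℝ)) :=
    exp_neg_integrableOn_Ioi _ hl
  exact ((h1.mono_set (Set.Ici_subset_Ioi.mpr (by norm_num))).const_mul l)

theorem exponential_minimum_volume_set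
    (l : ℝ) (hl : 0 < l) (α : ℝ) (hα : α ∈ Set.Ioo (0:ℝ) 1)
    (p : ℝ → ℝ) (hp : ∀ x, p x = if 0 ≤ x then l * Real.exp (-l * x) else 0) :
    (∫ x in Set.Icc (0:ℝ) (-Real.log (1 - α) / l), p x) = α ∧
    volume (Set.Icc (0:ℝ) (-Real.log (1 - α) / l)) =
      ENNReal.ofReal (-Real.log (1 - α) / l) ∧
    ∀ X : Set ℝ, MeasurableSet X → α ≤ (∫ x in X, p x) →
      ENNReal.ofReal (-Real.log (1 - α) / l) ≤ volume X := by
  obtain ⟨hα0, hα1⟩ := hα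
  set c : ℝ := -Real.log (1 - α) / l with hc
  have h1α : (0:ℝ) < 1 - α := by linarith
  have hlogneg : Real.log (1 - α) < 0 := Real.log_neg h1α (by linarith)
  have hcpos : 0 < c := div_pos (by linarith) hl
  have hlc : -l * c = Real.log (1 - α) := by
    rw [hc]; field_simp
  have hexpc : Real.exp (-l * c) = 1 - α := by
    rw [hlc, Real.exp_log h1α]
  -- part 1
  have hpart1 : (∫ x in Set.Icc (0:ℝ) c, p x) = α := by
    have hcongr : ∀ x ∈ Set.Icc (0:ℝ) c, p x = l * Real.exp (-l * x) := by
      intro x hx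
      rw [hp x, if_pos hx.1]
    rw [setIntegral_congr_fun measurableSet_Icc hcongr,
      integral_Icc_eq_integral_Ioc, ← intervalIntegral.integral_of_le hcpos.le,
      exp_interval_integral, hexpc]
    simp
  refine ⟨hpart1, ?_, ?_⟩
  · rw [Real.volume_Icc]; norm_num
  · intro X hX hXα
    set I : Set ℝ := Set.Icc (0:ℝ) c with hI
    have hIm : MeasurableSet I := measurableSet_Icc
    have hvolI : volume I = ENNReal.ofReal c := by
      rw [hI, Real.volume_Icc]; norm_num
    have hvolIlt : volume I < ⊤ := by rw [hvolI]; exact ENNReal.ofReal_lt_top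
    by_cases hB : volume (X \ I) = ⊤
    · have : volume X = ⊤ := by
        have := measure_mono (μ := volume) (Set.diff_subset : X \ I ⊆ X)
        rw [hB] at this
        exact top_le_iff.mp this
      rw [this]; exact le_top
    -- all relevant sets finite
    have hBlt : volume (X \ I) < ⊤ := lt_top_iff_ne_top.mpr hB
    have hAlt : volume (X ∩ I) < ⊤ :=
      lt_of_le_of_lt (measure_mono Set.inter_subset_right) hvolIlt
    have hClt : volume (I \ X) < ⊤ :=
      lt_of_le_of_lt (measure_mono Set.diff_subset) hvolIlt
    have hint : Integrable p := p_integrable l hl p hp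
    set m : ℝ := l * (1 - α) with hm
    have hmpos : 0 < m := mul_pos hl h1α
    -- pointwise bounds
    have hub : ∀ x ∉ I, p x ≤ m := by
      intro x hx
      rw [hp x]
      split_ifs with h0
      · have hxc : c < x := by
          by_contra hcon
          exact hx ⟨h0, not_lt.mp hcon⟩
        rw [hm, ← hexpc]
        apply mul_le_mul_of_nonneg_left _ hl.le
        apply Real.exp_le_exp.mpr
        nlinarith
      · exact hmpos.le
    have hlb : ∀ x ∈ I, m ≤ p x := by
      intro x hx
      rw [hp x, if_pos hx.1, hm, ← hexpc]
      apply mul_le_mul_of_nonneg_left _ hl.le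
      apply Real.exp_le_exp.mpr
      nlinarith [hx.2]
    -- split integrals
    have hXsplit : (∫ x in X, p x) = (∫ x in X ∩ I, p x) + (∫ x in X \ I, p x) := by
      rw [← setIntegral_union (Set.disjoint_of_subset_left Set.inter_subset_right
          disjoint_sdiff_self_right) (hX.diff hIm) (hint.integrableOn) (hint.integrableOn),
        Set.inter_union_diff]
    have hIsplit : (∫ x in I, p x) = (∫ x in X ∩ I, p x) + (∫ x in I \ X, p x) := by
      rw [← setIntegral_union ?_ (hIm.diff hX) (hint.integrableOn) (hint.integrableOn)]
      · rw [Set.inter_comm, Set.inter_union_diff]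
      · exact Set.disjoint_of_subset_left Set.inter_subset_left disjoint_sdiff_self_right
    have hBC : (∫ x in I \ X, p x) ≤ (∫ x in X \ I, p x) := by
      have := hXα
      rw [hXsplit] at this
      rw [← hpart1] at this
      rw [hIsplit] at this
      linarith
    -- integral bounds
    have hBbound : (∫ x in X \ I, p x) ≤ m * (volume (X \ I)).toReal := by
      have : (∫ x in X \ I, p x) ≤ ∫ x in X \ I, m := by
        apply setIntegral_mono_on hint.integrableOn (integrableOn_const hBlt.ne)
          (hX.diff hIm)
        intro x hx
        exact hub x hx.2
      rwa [setIntegral_const, smul_eq_mul, mul_comm] at this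
    have hCbound : m * (volume (I \ X)).toReal ≤ (∫ x in I \ X, p x) := by
      have : (∫ x in I \ X, m) ≤ ∫ x in I \ X, p x := by
        apply setIntegral_mono_on (integrableOn_const hClt.ne) hint.integrableOn
          (hIm.diff hX)
        intro x hx
        exact hlb x hx.1
      rwa [setIntegral_const, smul_eq_mul, mul_comm] at this
    have hvolBC : volume (I \ X) ≤ volume (X \ I) := by
      have hr : (volume (I \ X)).toReal ≤ (volume (X \ I)).toReal := by
        have := le_trans hCbound (le_trans hBC hBbound)
        exact le_of_mul_le_mul_left this hmpos
      exact (ENNReal.toReal_le_toReal hClt.ne hB).mp hr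
    calc ENNReal.ofReal c = volume I := hvolI.symm
      _ = volume (I ∩ X) + volume (I \ X) := (measure_inter_add_diff I hX).symm
      _ ≤ volume (X ∩ I) + volume (X \ I) := by
          rw [Set.inter_comm]
          exact add_le_add le_rfl hvolBC
      _ = volume X := measure_inter_add_diff X hIm
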